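/- Let X be an uncountable compact metric space, n ≥ 1, and suppose the topological dimension of X is strictly less than n. Then the set of functions f in C(X, ℝⁿ) such that the n-dimensional packing measure (equivalently, n-dimensional Lebesgue measure) of f(X) is positive is meagre in C(X, ℝⁿ). -/

import Mathlib

open Set Metric Filter MeasureTheory TopologicalSpace

noncomputable def coveringNumber {X : Type*} [MetricSpace X] (δ : ℝ) (F : Set X) : ℕ∞ :=
  sInf {m : ℕ∞ | ∃ C : Finset (Set X), (C.card : ℕ∞) = m ∧
    (∀ U ∈ C, IsOpen U ∧ Metric.diam U ≤ δ) ∧ F ⊆ ⋃ U ∈ C, U}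

noncomputable def packingNumber {X : Type*} [MetricSpace X] (δ : ℝ) (F : Set X) : ℕ∞ :=
  sSup {m : ℕ∞ | ∃ S : Finset X, (S.card : ℕ∞) = m ∧ (↑S : Set X) ⊆ F ∧
    (S : Set X).Pairwise fun x y => Disjoint (Metric.closedBall x δ) (Metric.closedBall y δ)}

noncomputable def upperBoxDim {X : Type*} [MetricSpace X] (F : Set X) : ℝ :=
  Filter.limsup (fun δ : ℝ => Real.log ((coveringNumber δ F).toNat) / (-Real.log δ))
    (nhdsWithin 0 (Set.Ioi 0))

noncomputable def lowerBoxDim {X : Type*} [MetricSpace X] (F : Set X) : ℝ :=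
  Filter.liminf (fun δ : ℝ => Real.log ((coveringNumber δ F).toNat) / (-Real.log δ))
    (nhdsWithin 0 (Set.Ioi 0))

noncomputable def packingDim {X : Type*} [MetricSpace X] (F : Set X) : ℝ :=
  sInf {s : ℝ | ∃ E : ℕ → Set X, F ⊆ ⋃ i, E i ∧ ∀ i, upperBoxDim (E i) ≤ s}

noncomputable def covDim (Y : Type*) [TopologicalSpace Y] : ℕ∞ :=
  sInf {m : ℕ∞ | ∀ (ι : Type) (U : ι → Set Y), (∀ i, IsOpen (U i)) → (⋃ i, U i) = Set.univ →
    ∃ (κ : Type) (V : κ → Set Y), (∀ j, IsOpen (V j)) ∧ (⋃ j, V j) = Set.univ ∧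
      (∀ j, ∃ i, V j ⊆ U i) ∧ ∀ y : Y, ENat.card {j : κ // y ∈ V j} ≤ m + 1}

lemma hull_null {n : ℕ} (s : Finset (Fin n → ℝ)) (hs : s.card ≤ n) :
    volume (convexHull ℝ (↑s : Set (Fin n → ℝ))) = 0 := by
  have h : affineSpan ℝ (↑s : Set (Fin n → ℝ)) ≠ ⊤ := by
    intro htop
    rcases s.eq_empty_or_nonempty with rfl | hne
    · simp at htop
    · obtain ⟨m, hm⟩ : ∃ m, s.card = m + 1 :=
        ⟨s.card - 1, (Nat.succ_pred_eq_of_pos hne.card_pos).symm⟩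
      have hv := AffineSubspace.vectorSpan_eq_top_of_affineSpan_eq_top ℝ _ _ htop
      have h2 : Module.finrank ℝ (vectorSpan ℝ (↑s : Set (Fin n → ℝ))) ≤ m := by
        have := finrank_vectorSpan_range_le ℝ (fun i : s => (i : Fin n → ℝ))
          (n := m) (by simp [hm])
        rw [show (range fun i : s => (i : Fin n → ℝ)) = ((↑s : Set (Fin n → ℝ))) from Subtype.range_coe] at this; exact this
      rw [hv] at h2
      have h3 : Module.finrank ℝ (⊤ : Submodule ℝ (Fin n → ℝ)) = n := by
        simp [Module.finrank_fintype_fun_eq_card]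
      omega
  refine le_antisymm ?_ zero_le
  calc volume (convexHull ℝ (↑s : Set (Fin n → ℝ)))
      ≤ volume (affineSpan ℝ (↑s : Set (Fin n → ℝ)) : Set (Fin n → ℝ)) :=
        measure_mono (convexHull_subset_affineSpan _)
    _ = 0 := Measure.addHaar_affineSubspace _ _ h

lemma key_approx {X : Type*} [MetricSpace X] [CompactSpace X] [Nonempty X]
    {n : ℕ} (hn : 1 ≤ n)
    (hdim : covDim X < (n : ℕ∞)) (f : C(X, Fin n → ℝ)) {ε : ℝ} (hε : 0 < ε) :
    ∃ g : C(X, Fin n → ℝ), dist g f < ε ∧ volume (Set.range g) = 0 := by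
  classical
  obtain ⟨m, hmS, hmn⟩ := sInf_lt_iff.mp hdim
  have hm1n : m + 1 ≤ (n : ℕ∞) := Order.add_one_le_of_lt hmn
  have hf : UniformContinuous f := CompactSpace.uniformContinuous_of_continuous f.continuous
  obtain ⟨δ, hδ, hδf⟩ := Metric.uniformContinuous_iff.mp hf (ε/8) (by linarith)
  set e : ℕ → X := TopologicalSpace.denseSeq X with he'
  have he : DenseRange e := TopologicalSpace.denseRange_denseSeq X
  set U : ℕ → Set X := fun k => f ⁻¹' (ball (f (e k)) (ε/8)) with hU
  have hUopen : ∀ k, IsOpen (U k) := fun k => (isOpen_ball).preimage f.continuous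
  have hUcover : (⋃ k, U k) = Set.univ := by
    ext x
    simp only [Set.mem_iUnion, Set.mem_univ, iff_true]
    obtain ⟨k, hk⟩ := he.exists_dist_lt x hδ
    exact ⟨k, by simpa [hU, dist_comm] using hδf (by simpa [dist_comm] using hk)⟩
  obtain ⟨κ, V, hVopen, hVcover, hVref, hVmult⟩ := hmS ℕ U hUopen hUcover
  -- finite subcover
  obtain ⟨t, ht⟩ := isCompact_univ.elim_finite_subcover V hVopen (by rw [hVcover])
  -- chosen points
  set p : κ → X := fun j => if h : (V j).Nonempty then h.choose else Classical.arbitrary X with hp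
  set w : κ → (Fin n → ℝ) := fun j => f (p j) with hw
  -- partition functions
  set φ : κ → X → ℝ := fun j x => if h : ((V j)ᶜ).Nonempty then infDist x ((V j)ᶜ) else 1 with hφ
  have hφc : ∀ j, Continuous (φ j) := by
    intro j
    by_cases h : ((V j)ᶜ).Nonempty
    · simp only [hφ, h, dif_pos]
      exact continuous_infDist_pt _
    · simp only [hφ, h, dif_neg, not_false_iff]
      exact continuous_const
  have hφ0 : ∀ j x, 0 ≤ φ j x := by
    intro j x
    by_cases h : ((V j)ᶜ).Nonempty <;> simp [hφ, h, infDist_nonneg]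
  have hφmem : ∀ j x, φ j x ≠ 0 → x ∈ V j := by
    intro j x hx
    by_cases h : ((V j)ᶜ).Nonempty
    · have : 0 < infDist x ((V j)ᶜ) := lt_of_le_of_ne (infDist_nonneg) (by simpa [hφ, h] using Ne.symm hx)
      have := ((hVopen j).isClosed_compl.notMem_iff_infDist_pos h).mpr this
      simpa using this
    · have : V j = Set.univ := by
        rw [← compl_empty_iff]; exact Set.not_nonempty_iff_eq_empty.mp h
      simp [this]
  have hφpos : ∀ j x, x ∈ V j → 0 < φ j x := by
    intro j x hx
    by_cases h : ((V j)ᶜ).Nonempty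
    · simp only [hφ, h, dif_pos]
      exact ((hVopen j).isClosed_compl.notMem_iff_infDist_pos h).mp (by simpa using hx)
    · simp [hφ, h]
  have hsum : ∀ x, 0 < ∑ j ∈ t, φ j x := by
    intro x
    have hx := ht (Set.mem_univ x)
    simp only [Set.mem_iUnion] at hx
    obtain ⟨j, hjt, hjx⟩ := hx
    exact Finset.sum_pos' (fun i _ => hφ0 i x) ⟨j, hjt, hφpos j x hjx⟩
  -- the approximating map
  set g0 : X → (Fin n → ℝ) := fun x => t.centerMass (fun j => φ j x) w with hg0
  have hc1 : Continuous fun x => ∑ j ∈ t, φ j x := continuous_finset_sum _ fun j _ => hφc j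
  have hg0c : Continuous g0 := by
    simp only [hg0, Finset.centerMass]
    exact (hc1.inv₀ fun x => (hsum x).ne').smul
      (continuous_finset_sum _ fun j _ => (hφc j).smul continuous_const)
  have hgmem : ∀ x, g0 x ∈ convexHull ℝ (w '' {j | j ∈ t ∧ φ j x ≠ 0}) := by
    intro x
    have h1 : g0 x = (t.filter fun j => φ j x ≠ 0).centerMass (fun j => φ j x) w :=
      (Finset.centerMass_filter_ne_zero _).symm
    rw [h1]
    refine Finset.centerMass_mem_convexHull _ (fun i _ => hφ0 i x) ?_ ?_
    · rw [Finset.sum_filter_ne_zero]; exact hsum x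
    · intro i hi
      simp only [Finset.mem_filter] at hi
      exact Set.mem_image_of_mem w hi
  -- p j lands in V j when V j is nonempty
  have hpV : ∀ j, (V j).Nonempty → p j ∈ V j := by
    intro j h
    simp only [hp, dif_pos h]
    exact h.choose_spec
  -- distance estimate for chosen points
  have hwd : ∀ x j, j ∈ t → φ j x ≠ 0 → dist (w j) (f x) ≤ ε/2 := by
    intro x j _ hj
    have hxV : x ∈ V j := hφmem j x hj
    obtain ⟨k, hk⟩ := hVref j
    have hx : x ∈ U k := hk hxV
    have hpj : p j ∈ U k := hk (hpV j ⟨x, hxV⟩)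
    simp only [hU, Set.mem_preimage, mem_ball] at hx hpj
    calc dist (w j) (f x) ≤ dist (f (p j)) (f (e k)) + dist (f (e k)) (f x) := dist_triangle _ _ _
      _ ≤ ε/8 + ε/8 := by rw [dist_comm (f (e k)) (f x)]; exact add_le_add hpj.le hx.le
      _ ≤ ε/2 := by linarith
  set g : C(X, Fin n → ℝ) := ⟨g0, hg0c⟩ with hg
  refine ⟨g, ?_, ?_⟩
  · rw [ContinuousMap.dist_lt_iff hε]
    intro x
    have h1 : convexHull ℝ (w '' {j | j ∈ t ∧ φ j x ≠ 0}) ⊆ closedBall (f x) (ε/2) := by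
      apply convexHull_min ?_ (convex_closedBall _ _)
      rintro y ⟨j, ⟨hjt, hjφ⟩, rfl⟩
      exact mem_closedBall.mpr (hwd x j hjt hjφ)
    have := h1 (hgmem x)
    simp only [mem_closedBall] at this
    calc dist (g x) (f x) ≤ ε/2 := this
      _ < ε := by linarith
  · -- measure zero
    set P : Finset (Finset κ) := t.powerset.filter (fun s => s.card ≤ n) with hP
    have hrange : Set.range g ⊆ ⋃ s ∈ P, convexHull ℝ (w '' ↑s) := by
      rintro _ ⟨x, rfl⟩
      set sx : Finset κ := t.filter (fun j => φ j x ≠ 0) with hsx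
      have hcard : sx.card ≤ n := by
        set T : Set κ := {j | x ∈ V j} with hT
        have hmult := hVmult x
        have hTfin : T.Finite := by
          rw [← Set.not_infinite]
          intro hinf
          have : ENat.card {j : κ // x ∈ V j} = ⊤ := by
            haveI : Infinite {j : κ // x ∈ V j} := hinf.to_subtype
            exact ENat.card_eq_top_of_infinite
          rw [this] at hmult
          exact absurd (le_trans hmult hm1n) (by simp)
        haveI : Finite {j : κ // x ∈ V j} := hTfin.to_subtype
        rw [ENat.card_eq_coe_natCard] at hmult
        have hnat : Nat.card {j : κ // x ∈ V j} ≤ n := by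
          exact_mod_cast le_trans hmult hm1n
        have hsub : (↑sx : Set κ) ⊆ T := by
          intro j hj
          simp only [hsx, Finset.coe_filter, Set.mem_setOf_eq] at hj
          exact hφmem j x hj.2
        calc sx.card = (↑sx : Set κ).ncard := (Set.ncard_coe_finset sx).symm
          _ ≤ T.ncard := Set.ncard_le_ncard hsub hTfin
          _ = Nat.card {j : κ // x ∈ V j} := (Nat.card_coe_set_eq T).symm
          _ ≤ n := hnat
      have hsxP : sx ∈ P := by
        simp only [hP, Finset.mem_filter, Finset.mem_powerset]
        exact ⟨Finset.filter_subset _ _, hcard⟩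
      apply Set.mem_biUnion hsxP
      have : w '' {j | j ∈ t ∧ φ j x ≠ 0} = w '' ↑sx := by
        congr 1
        ext j
        simp [hsx]
      rw [← this]
      exact hgmem x
    refine le_antisymm (le_trans (measure_mono hrange) ?_) zero_le
    refine le_trans (measure_biUnion_finset_le P _) (le_of_eq (Finset.sum_eq_zero ?_))
    intro s hs
    simp only [hP, Finset.mem_filter] at hs
    have h2 : w '' ↑s = ↑(s.image w) := (Finset.coe_image).symm
    rw [h2]
    exact hull_null _ (le_trans (Finset.card_image_le) hs.2)

theorem stmt12 {X : Type*} [MetricSpace X] [CompactSpace X]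
    (hX : ¬(Set.univ : Set X).Countable) (n : ℕ) (hn : 1 ≤ n)
    (hdim : covDim X < (n : ℕ∞)) :
    IsMeagre {f : C(X, Fin n → ℝ) | 0 < MeasureTheory.volume (Set.range f)} := by
  classical
  haveI : Nonempty X := by
    by_contra h
    rw [not_nonempty_iff] at h
    exact hX Set.countable_univ
  set F : ℕ → Set C(X, Fin n → ℝ) :=
    fun k => {f | ((k : ENNReal) + 1)⁻¹ ≤ volume (Set.range f)} with hF
  have hsub : {f : C(X, Fin n → ℝ) | 0 < volume (Set.range f)} ⊆ ⋃ k, F k := by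
    intro f hf
    obtain ⟨k, hk⟩ := ENNReal.exists_inv_nat_lt (ne_of_gt hf)
    refine Set.mem_iUnion.mpr ⟨k, ?_⟩
    refine le_trans (ENNReal.inv_le_inv.mpr ?_) hk.le
    exact_mod_cast Nat.le_succ k
  have hclosed : ∀ k, IsClosed (F k) := by
    intro k
    rw [← isOpen_compl_iff]
    rw [Metric.isOpen_iff]
    intro f hf
    simp only [hF, Set.mem_compl_iff, Set.mem_setOf_eq, not_le] at hf
    obtain ⟨O, hOsub, hOopen, hOv⟩ :=
      Set.exists_isOpen_lt_of_lt (Set.range f) _ hf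
    obtain ⟨δ, hδ, hδO⟩ :=
      (isCompact_range f.continuous).exists_thickening_subset_open hOopen hOsub
    refine ⟨δ, hδ, ?_⟩
    intro g hg
    simp only [hF, Set.mem_compl_iff, Set.mem_setOf_eq, not_le]
    refine lt_of_le_of_lt (le_trans (measure_mono ?_) (measure_mono hδO)) hOv
    rintro _ ⟨x, rfl⟩
    rw [Metric.mem_thickening_iff]
    refine ⟨f x, Set.mem_range_self x, ?_⟩
    calc dist (g x) (f x) ≤ dist g f := ContinuousMap.dist_apply_le_dist x
      _ < δ := mem_ball.mp hg
  have hint : ∀ k, interior (F k) = ∅ := by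
    intro k
    rw [Set.eq_empty_iff_forall_notMem]
    intro f hf
    rw [mem_interior_iff_mem_nhds, Metric.mem_nhds_iff] at hf
    obtain ⟨ε, hε, hball⟩ := hf
    obtain ⟨g, hgf, hg0⟩ := key_approx hn hdim f hε
    have hgF := hball (mem_ball.mpr hgf)
    simp only [hF, Set.mem_setOf_eq, hg0, le_zero_iff] at hgF
    exact (ENNReal.inv_ne_zero.mpr (by simp)) hgF
  refine IsMeagre.mono hsub (isMeagre_iUnion fun k => ?_)
  rw [isMeagre_iff_countable_union_isNowhereDense]
  exact ⟨{F k}, by simp [(hclosed k).isNowhereDense_iff, hint k],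
    Set.countable_singleton _, by simp⟩
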